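/- Assume mild ill-posedness: $c_{\min} k^{-a} \le \lambda_k \le c_{\max} k^{-a}$ for all $k \in \mathbb{N}$ with $a > 1$. Then for the spectral cutoff filter $q_\alpha(\lambda) = \lambda^{-1}\mathbf{1}\{\lambda \ge \alpha\}$ there exist constants $0 < c \le C$ such that for all sufficiently small $\alpha > 0$: $c\, \alpha^{-(a+1)/a} \le \sum_{k=1}^\infty \lambda_k q_\alpha(\lambda_k)^2 \le C\, \alpha^{-(a+1)/a}$. -/

import Mathlib

noncomputable def cutoffFilter (α x : ℝ) : ℝ := if α ≤ x then 1 / x else 0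

set_option maxHeartbeats 1000000 in
/-- In the mildly ill-posed case (`λ_k ≍ k^{-a}`, `a > 1`), the variance
of spectral cutoff is of order `α^{-(a+1)/a}` for all sufficiently small `α`. -/
theorem solit_mild_cutoff_variance (lam : ℕ → ℝ) (a cmin cmax : ℝ)
    (ha : 1 < a) (h0 : 0 < cmin) (hc : cmin ≤ cmax)
    (hl : ∀ k : ℕ, cmin * ((k : ℝ) + 1) ^ (-a) ≤ lam k ∧
      lam k ≤ cmax * ((k : ℝ) + 1) ^ (-a)) :
    ∃ c C : ℝ, 0 < c ∧ c ≤ C ∧ ∃ α₀ > (0:ℝ), ∀ α : ℝ, 0 < α → α ≤ α₀ →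
      c * α ^ (-(a + 1) / a) ≤ (∑' k, lam k * (cutoffFilter α (lam k)) ^ 2) ∧
      (∑' k, lam k * (cutoffFilter α (lam k)) ^ 2) ≤ C * α ^ (-(a + 1) / a) := by
  have ha0 : (0:ℝ) < a := by linarith
  have hcmax : 0 < cmax := lt_of_lt_of_le h0 hc
  set e : ℝ := (a+1)/a with he
  have hee : -(a+1)/a = -e := by rw [he, neg_div]
  have he0 : 0 < e := div_pos (by linarith) ha0
  have hlam : ∀ k : ℕ, 0 < lam k := by
    intro k
    have h1 : (0:ℝ) < ((k:ℝ)+1) ^ (-a) := Real.rpow_pos_of_pos (by positivity) _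
    nlinarith [(hl k).1]
  have hfk : ∀ (α : ℝ) (k : ℕ), lam k * (cutoffFilter α (lam k))^2
      = if α ≤ lam k then (lam k)⁻¹ else 0 := by
    intro α k
    unfold cutoffFilter
    split
    · have := (hlam k).ne'
      field_simp
    · ring
  have hfnonneg : ∀ (α : ℝ) (k : ℕ), 0 ≤ lam k * (cutoffFilter α (lam k))^2 := by
    intro α k
    rw [hfk]
    split
    · exact inv_nonneg.2 (hlam k).le
    · exact le_rfl
  -- 2 ≤ 2^a
  have h2a : (2:ℝ) ≤ (2:ℝ) ^ a := by
    nth_rewrite 1 [show (2:ℝ) = (2:ℝ) ^ (1:ℝ) by rw [Real.rpow_one]]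
    exact Real.rpow_le_rpow_left_iff (by norm_num) |>.2 ha.le
  set α₀ : ℝ := cmin / (2:ℝ) ^ a with hα₀def
  have hα₀ : 0 < α₀ := div_pos h0 (Real.rpow_pos_of_pos two_pos _)
  set c : ℝ := cmax⁻¹ * cmin ^ e / (4:ℝ) ^ (a+1) with hcdef
  set C : ℝ := cmin⁻¹ * cmax ^ e * (2:ℝ) ^ (a+1) with hCdef
  have hc0 : 0 < c := by
    have := Real.rpow_pos_of_pos h0 e
    have := Real.rpow_pos_of_pos (show (0:ℝ) < 4 by norm_num) (a+1)
    positivity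
  have hmain : ∀ α : ℝ, 0 < α → α ≤ α₀ →
      c * α ^ (-(a + 1) / a) ≤ (∑' k, lam k * (cutoffFilter α (lam k)) ^ 2) ∧
      (∑' k, lam k * (cutoffFilter α (lam k)) ^ 2) ≤ C * α ^ (-(a + 1) / a) := by
    intro α hα hαα₀
    rw [hee]
    have hαcmin : α * (2:ℝ)^a ≤ cmin := by
      rw [hα₀def, le_div_iff₀ (Real.rpow_pos_of_pos two_pos _)] at hαα₀
      exact hαα₀
    have hαcmax : α ≤ cmax := by nlinarith
    -- upper bound setup
    set Mu : ℝ := (cmax/α) ^ (1/a:ℝ) with hMudef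
    have hMupos : 0 < Mu := Real.rpow_pos_of_pos (div_pos hcmax hα) _
    have hMu1 : 1 ≤ Mu := by
      calc (1:ℝ) = (1:ℝ) ^ (1/a:ℝ) := (Real.one_rpow _).symm
        _ ≤ Mu := Real.rpow_le_rpow zero_le_one ((one_le_div hα).2 hαcmax) (by positivity)
    have hMua : Mu ^ a = cmax / α := by
      rw [hMudef, ← Real.rpow_mul (div_pos hcmax hα).le, one_div_mul_cancel ha0.ne',
        Real.rpow_one]
    set K : ℕ := ⌈Mu⌉₊ with hKdef
    have hK1 : 1 ≤ K := Nat.one_le_ceil_iff.2 hMupos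
    have hKpos : (0:ℝ) < K := by exact_mod_cast hK1
    have hsupp : ∀ k : ℕ, k ∉ Finset.range K → lam k * (cutoffFilter α (lam k))^2 = 0 := by
      intro k hk
      rw [Finset.mem_range, not_lt] at hk
      have hkM : Mu < (k:ℝ) + 1 := by
        have h1 : Mu ≤ (K:ℝ) := Nat.le_ceil Mu
        have h2 : (K:ℝ) ≤ (k:ℝ) := by exact_mod_cast hk
        linarith
      have h3 : cmax / α < ((k:ℝ)+1) ^ a := by
        rw [← hMua]
        exact Real.rpow_lt_rpow hMupos.le hkM ha0
      have h4 : lam k < α := by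
        have h5 : (0:ℝ) < ((k:ℝ)+1) ^ a := Real.rpow_pos_of_pos (by positivity) _
        have h6 : cmax * ((k:ℝ)+1) ^ (-a) < α := by
          rw [Real.rpow_neg (by positivity)]
          rw [div_lt_iff₀ hα] at h3
          rw [mul_inv_lt_iff₀ h5]  -- cmax * t⁻¹ < α ↔ cmax < α * t ?
          nlinarith
        linarith [(hl k).2]
      rw [hfk, if_neg (not_le.2 h4)]
    have hsum : Summable (fun k => lam k * (cutoffFilter α (lam k))^2) :=
      summable_of_ne_finset_zero (s := Finset.range K) hsupp
    have htsum : (∑' k, lam k * (cutoffFilter α (lam k)) ^ 2)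
        = ∑ k ∈ Finset.range K, lam k * (cutoffFilter α (lam k))^2 :=
      tsum_eq_sum hsupp
    constructor
    · -- lower bound
      set Ml : ℝ := (cmin/α) ^ (1/a:ℝ) with hMldef
      have hMlpos : 0 < Ml := Real.rpow_pos_of_pos (div_pos h0 hα) _
      have hMl2 : 2 ≤ Ml := by
        have h1 : (2:ℝ)^a ≤ cmin / α := (le_div_iff₀ hα).2 (by linarith [hαcmin])
        calc (2:ℝ) = ((2:ℝ)^a) ^ (1/a:ℝ) := by
              rw [← Real.rpow_mul (by norm_num : (0:ℝ) ≤ 2), mul_one_div_cancel ha0.ne',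
                Real.rpow_one]
          _ ≤ Ml := Real.rpow_le_rpow (by positivity) h1 (by positivity)
      have hMla : Ml ^ a = cmin / α := by
        rw [hMldef, ← Real.rpow_mul (div_pos h0 hα).le, one_div_mul_cancel ha0.ne',
          Real.rpow_one]
      set N : ℕ := ⌊Ml⌋₊ with hNdef
      have hNMl : (N:ℝ) ≤ Ml := Nat.floor_le hMlpos.le
      have hNge : Ml - 1 < (N:ℝ) := Nat.sub_one_lt_floor Ml
      have hterm : ∀ k ∈ Finset.Ico (N/2) N,
          cmax⁻¹ * (Ml/2) ^ a ≤ lam k * (cutoffFilter α (lam k))^2 := by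
        intro k hk
        rw [Finset.mem_Ico] at hk
        have hkN : (k:ℝ) + 1 ≤ (N:ℝ) := by exact_mod_cast Nat.succ_le_of_lt hk.2
        have hka : ((k:ℝ)+1) ^ a ≤ cmin / α := by
          rw [← hMla]
          exact Real.rpow_le_rpow (by positivity) (hkN.trans hNMl) ha0.le
        have hαlam : α ≤ lam k := by
          have h5 : (0:ℝ) < ((k:ℝ)+1) ^ a := Real.rpow_pos_of_pos (by positivity) _
          have h6 : α ≤ cmin * ((k:ℝ)+1) ^ (-a) := by
            rw [Real.rpow_neg (by positivity), ← div_eq_mul_inv, le_div_iff₀ h5]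
            rw [le_div_iff₀ hα] at hka
            nlinarith
          linarith [(hl k).1]
        rw [hfk, if_pos hαlam]
        have hNhalf : Ml/2 ≤ (k:ℝ) + 1 := by
          have h7 : (N:ℕ) ≤ 2 * (N/2) + 1 := by omega
          have h8 : (N:ℝ) ≤ 2 * ((N/2 : ℕ):ℝ) + 1 := by exact_mod_cast h7
          have h9 : ((N/2:ℕ):ℝ) ≤ (k:ℝ) := by exact_mod_cast hk.1
          linarith
        have h10 : (Ml/2) ^ a ≤ ((k:ℝ)+1) ^ a :=
          Real.rpow_le_rpow (by positivity) hNhalf ha0.le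
        have h11 : (lam k)⁻¹ ≥ cmax⁻¹ * ((k:ℝ)+1) ^ a := by
          have h12 : lam k ≤ cmax * ((k:ℝ)+1) ^ (-a) := (hl k).2
          have h5 : (0:ℝ) < ((k:ℝ)+1) ^ a := Real.rpow_pos_of_pos (by positivity) _
          rw [Real.rpow_neg (by positivity)] at h12
          have h13 : (cmax * (((k:ℝ)+1) ^ a)⁻¹)⁻¹ ≤ (lam k)⁻¹ :=
            inv_anti₀ (hlam k) h12
          rw [mul_inv, inv_inv] at h13
          linarith
        have := mul_le_mul_of_nonneg_left h10 (inv_nonneg.2 hcmax.le)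
        linarith
      have hcard : Ml / 4 ≤ ((Finset.Ico (N/2) N).card : ℝ) := by
        rw [Nat.card_Ico]
        have h7 : N ≤ 2 * (N - N/2) := by omega
        have h8 : (N:ℝ) ≤ 2 * ((N - N/2 : ℕ):ℝ) := by exact_mod_cast h7
        linarith [hNge, hMl2]
      have hsumlow : ((Finset.Ico (N/2) N).card : ℝ) * (cmax⁻¹ * (Ml/2) ^ a)
          ≤ ∑ k ∈ Finset.Ico (N/2) N, lam k * (cutoffFilter α (lam k))^2 := by
        have := Finset.card_nsmul_le_sum (Finset.Ico (N/2) N) _ _ hterm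
        simpa [nsmul_eq_mul] using this
      have hsle : ∑ k ∈ Finset.Ico (N/2) N, lam k * (cutoffFilter α (lam k))^2
          ≤ ∑' k, lam k * (cutoffFilter α (lam k))^2 :=
        Summable.sum_le_tsum _ (fun k _ => hfnonneg α k) hsum
      have hq : c * α ^ (-e) ≤ ((Finset.Ico (N/2) N).card : ℝ) * (cmax⁻¹ * (Ml/2) ^ a) := by
        have h20 : (Ml/4) * (cmax⁻¹ * (Ml/2) ^ a)
            ≤ ((Finset.Ico (N/2) N).card : ℝ) * (cmax⁻¹ * (Ml/2) ^ a) := by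
          apply mul_le_mul_of_nonneg_right hcard
          positivity
        have h21 : (Ml/4) ^ a ≤ (Ml/2) ^ a :=
          Real.rpow_le_rpow (by positivity) (by linarith) ha0.le
        have h22 : cmax⁻¹ * (Ml/4) ^ (a+1) ≤ (Ml/4) * (cmax⁻¹ * (Ml/2) ^ a) := by
          rw [Real.rpow_add (by positivity : (0:ℝ) < Ml/4), Real.rpow_one]
          have := mul_le_mul_of_nonneg_left h21 (by positivity : (0:ℝ) ≤ cmax⁻¹ * (Ml/4))
          nlinarith [Real.rpow_pos_of_pos (show (0:ℝ) < Ml/4 by positivity) a]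
        have h23 : c * α ^ (-e) = cmax⁻¹ * (Ml/4) ^ (a+1) := by
          rw [Real.div_rpow (by positivity) (by norm_num : (0:ℝ) ≤ 4)]
          have h24 : Ml ^ (a+1) = cmin ^ e * α ^ (-e) := by
            rw [hMldef, ← Real.rpow_mul (div_pos h0 hα).le]
            have : 1/a * (a+1) = e := by rw [he]; ring
            rw [this, Real.div_rpow h0.le hα.le, Real.rpow_neg hα.le, div_eq_mul_inv]
          rw [h24, hcdef]
          ring
        rw [h23]
        linarith
      linarith
    · -- upper bound
      have hKle : (K:ℝ) ≤ 2 * Mu := by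
        have h1 : (K:ℝ) < Mu + 1 := Nat.ceil_lt_add_one hMupos.le
        linarith
      have hterm : ∀ k ∈ Finset.range K,
          lam k * (cutoffFilter α (lam k))^2 ≤ cmin⁻¹ * (K:ℝ) ^ a := by
        intro k hk
        rw [Finset.mem_range] at hk
        have hkK : (k:ℝ) + 1 ≤ (K:ℝ) := by exact_mod_cast Nat.succ_le_of_lt hk
        have h5 : (0:ℝ) < ((k:ℝ)+1) ^ a := Real.rpow_pos_of_pos (by positivity) _
        have h11 : (lam k)⁻¹ ≤ cmin⁻¹ * ((k:ℝ)+1) ^ a := by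
          have h12 := (hl k).1
          rw [Real.rpow_neg (by positivity)] at h12
          have hcp : (0:ℝ) < cmin * (((k:ℝ)+1) ^ a)⁻¹ := by positivity
          have h13 : (lam k)⁻¹ ≤ (cmin * (((k:ℝ)+1) ^ a)⁻¹)⁻¹ :=
            inv_anti₀ hcp h12
          rw [mul_inv, inv_inv] at h13
          linarith
        have h14 : ((k:ℝ)+1) ^ a ≤ (K:ℝ) ^ a :=
          Real.rpow_le_rpow (by positivity) hkK ha0.le
        have h15 : lam k * (cutoffFilter α (lam k))^2 ≤ (lam k)⁻¹ := by
          rw [hfk]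
          split
          · exact le_rfl
          · exact inv_nonneg.2 (hlam k).le
        have := mul_le_mul_of_nonneg_left h14 (inv_nonneg.2 h0.le)
        linarith
      have hsumup : (∑' k, lam k * (cutoffFilter α (lam k))^2)
          ≤ (K:ℝ) * (cmin⁻¹ * (K:ℝ) ^ a) := by
        rw [htsum]
        have := Finset.sum_le_card_nsmul (Finset.range K) _ _ hterm
        simpa [nsmul_eq_mul, Finset.card_range] using this
      have h30 : (K:ℝ) * (cmin⁻¹ * (K:ℝ) ^ a) = cmin⁻¹ * (K:ℝ) ^ (a+1) := by
        rw [Real.rpow_add hKpos, Real.rpow_one]; ring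
      have h31 : cmin⁻¹ * (K:ℝ) ^ (a+1) ≤ cmin⁻¹ * (2*Mu) ^ (a+1) := by
        apply mul_le_mul_of_nonneg_left _ (inv_nonneg.2 h0.le)
        exact Real.rpow_le_rpow hKpos.le hKle (by linarith)
      have h32 : cmin⁻¹ * (2*Mu) ^ (a+1) = C * α ^ (-e) := by
        rw [Real.mul_rpow (by norm_num : (0:ℝ) ≤ 2) hMupos.le]
        have h24 : Mu ^ (a+1) = cmax ^ e * α ^ (-e) := by
          rw [hMudef, ← Real.rpow_mul (div_pos hcmax hα).le]
          have : 1/a * (a+1) = e := by rw [he]; ring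
          rw [this, Real.div_rpow hcmax.le hα.le, Real.rpow_neg hα.le, div_eq_mul_inv]
        rw [h24, hCdef]
        ring
      linarith
  have hcC : c ≤ C := by
    obtain ⟨h1, h2⟩ := hmain α₀ hα₀ le_rfl
    have h3 := h1.trans h2
    have h4 : (0:ℝ) < α₀ ^ (-(a+1)/a) := Real.rpow_pos_of_pos hα₀ _
    exact le_of_mul_le_mul_right h3 h4
  exact ⟨c, C, hc0, hcC, α₀, hα₀, hmain⟩
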